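/- Let p be a prime and m ∈ ℕ. For all i, j ∈ ℕ the rational number ((i+j)!/(i!·j!))·(q^(m)_i!·q^(m)_j!/q^(m)_{i+j}!) lies in ℤ_p; equivalently, v_p(q^(m)_{i+j}!) ≤ v_p((i+j)!) − v_p(i!) − v_p(j!) + v_p(q^(m)_i!) + v_p(q^(m)_j!). -/

import Mathlib

/-!
STATEMENT 4: Let `p` be a prime and `m : ℕ`. For all `i, j : ℕ` the rational
number `((i+j)!/(i!·j!)) · (q^(m)_i!·q^(m)_j!/q^(m)_{i+j}!)` lies in `ℤ_[p]`.

Here `q^(m)_n = ⌊n/p^m⌋`.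
-/

/-- `q^(m)_n = ⌊n / p^m⌋`. -/
def qm (p m n : ℕ) : ℕ := n / p ^ m

/-- The `p`-adic valuation of `(qm p m n)!` is a sum of `n / p^t` over `Ico (m+1) (m+b)`. -/
lemma padicValNat_qm_factorial (p : ℕ) [Fact p.Prime] (m n b : ℕ)
    (hb : Nat.log p n < b) :
    padicValNat p (qm p m n).factorial = ∑ t ∈ Finset.Ico (m + 1) (m + b), n / p ^ t := by
  have hq : Nat.log p (qm p m n) < b :=
    lt_of_le_of_lt (Nat.log_mono_right (Nat.div_le_self _ _)) hb
  rw [padicValNat_factorial hq]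
  rw [show m + 1 = 1 + m by ring, show m + b = b + m by ring,
    ← Finset.sum_Ico_add (fun t => n / p ^ t) 1 b m]
  apply Finset.sum_congr rfl
  intro t _
  rw [qm, Nat.div_div_eq_div_mul, ← pow_add]

theorem qfac_binom_integral (p : ℕ) [Fact p.Prime] (m i j : ℕ) :
    ∃ z : ℤ_[p], (z : ℚ_[p]) =
      (((i + j).factorial : ℚ_[p]) / ((i.factorial : ℚ_[p]) * (j.factorial : ℚ_[p]))) *
        (((qm p m i).factorial : ℚ_[p]) * ((qm p m j).factorial : ℚ_[p]) /
          ((qm p m (i + j)).factorial : ℚ_[p])) := by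
  have hp : p.Prime := Fact.out
  -- the valuation inequality
  set b := Nat.log p (i + j) + 1 with hbdef
  have hbi : Nat.log p i < b := lt_of_le_of_lt (Nat.log_mono_right (Nat.le_add_right i j))
    (Nat.lt_succ_self _)
  have hbj : Nat.log p j < b := lt_of_le_of_lt (Nat.log_mono_right (Nat.le_add_left j i))
    (Nat.lt_succ_self _)
  have hbn : Nat.log p (i + j) < b := Nat.lt_succ_self _
  have hbi' : Nat.log p i < m + b := lt_of_lt_of_le hbi (Nat.le_add_left b m)
  have hbj' : Nat.log p j < m + b := lt_of_lt_of_le hbj (Nat.le_add_left b m)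
  have hbn' : Nat.log p (i + j) < m + b := lt_of_lt_of_le hbn (Nat.le_add_left b m)
  have key : padicValNat p i.factorial + padicValNat p j.factorial
      + padicValNat p (qm p m (i + j)).factorial
      ≤ padicValNat p (i + j).factorial + padicValNat p (qm p m i).factorial
      + padicValNat p (qm p m j).factorial := by
    rw [padicValNat_factorial hbi', padicValNat_factorial hbj',
      padicValNat_factorial hbn',
      padicValNat_qm_factorial p m i b hbi, padicValNat_qm_factorial p m j b hbj,
      padicValNat_qm_factorial p m (i + j) b hbn]
    have hsub : Finset.Ico (m + 1) (m + b) ⊆ Finset.Ico 1 (m + b) := by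
      apply Finset.Ico_subset_Ico (Nat.le_add_left 1 m) le_rfl
    have hterm : ∀ t, i / p ^ t + j / p ^ t ≤ (i + j) / p ^ t :=
      fun t => Nat.add_div_le_add_div i j (p ^ t)
    -- rewrite both sides using sums of differences
    have hA : ∑ t ∈ Finset.Ico 1 (m + b), (i + j) / p ^ t
        = ∑ t ∈ Finset.Ico 1 (m + b), (i / p ^ t + j / p ^ t)
          + ∑ t ∈ Finset.Ico 1 (m + b), ((i + j) / p ^ t - (i / p ^ t + j / p ^ t)) := by
      rw [← Finset.sum_add_distrib]
      exact Finset.sum_congr rfl fun t _ => (Nat.add_sub_cancel' (hterm t)).symm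
    have hB : ∑ t ∈ Finset.Ico (m + 1) (m + b), (i + j) / p ^ t
        = ∑ t ∈ Finset.Ico (m + 1) (m + b), (i / p ^ t + j / p ^ t)
          + ∑ t ∈ Finset.Ico (m + 1) (m + b), ((i + j) / p ^ t - (i / p ^ t + j / p ^ t)) := by
      rw [← Finset.sum_add_distrib]
      exact Finset.sum_congr rfl fun t _ => (Nat.add_sub_cancel' (hterm t)).symm
    have hmono : ∑ t ∈ Finset.Ico (m + 1) (m + b), ((i + j) / p ^ t - (i / p ^ t + j / p ^ t))
        ≤ ∑ t ∈ Finset.Ico 1 (m + b), ((i + j) / p ^ t - (i / p ^ t + j / p ^ t)) :=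
      Finset.sum_le_sum_of_subset hsub
    have hsplit : ∀ n : ℕ, ∑ t ∈ Finset.Ico (m + 1) (m + b), n / p ^ t
        = ∑ t ∈ Finset.Ico (m + 1) (m + b), n / p ^ t := fun _ => rfl
    have hIJ : ∑ t ∈ Finset.Ico (m + 1) (m + b), (i / p ^ t + j / p ^ t)
        = ∑ t ∈ Finset.Ico (m + 1) (m + b), i / p ^ t
          + ∑ t ∈ Finset.Ico (m + 1) (m + b), j / p ^ t := Finset.sum_add_distrib
    have hIJ' : ∑ t ∈ Finset.Ico 1 (m + b), (i / p ^ t + j / p ^ t)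
        = ∑ t ∈ Finset.Ico 1 (m + b), i / p ^ t
          + ∑ t ∈ Finset.Ico 1 (m + b), j / p ^ t := Finset.sum_add_distrib
    omega
  -- the rational number
  set n := i + j with hn
  set r : ℚ := (n.factorial * ((qm p m i).factorial * (qm p m j).factorial) : ℚ)
    / ((i.factorial * j.factorial) * (qm p m n).factorial : ℚ) with hr
  have fne : ∀ k : ℕ, (k.factorial : ℚ) ≠ 0 := fun k => by
    exact_mod_cast k.factorial_ne_zero
  have hnum : (n.factorial * ((qm p m i).factorial * (qm p m j).factorial) : ℚ) ≠ 0 :=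
    mul_ne_zero (fne n) (mul_ne_zero (fne _) (fne _))
  have hden : ((i.factorial * j.factorial) * (qm p m n).factorial : ℚ) ≠ 0 :=
    mul_ne_zero (mul_ne_zero (fne i) (fne j)) (fne _)
  have hr0 : r ≠ 0 := div_ne_zero hnum hden
  have hval : 0 ≤ padicValRat p r := by
    rw [hr, padicValRat.div (p := p) hnum hden,
      padicValRat.mul (p := p) (fne n) (mul_ne_zero (fne _) (fne _)),
      padicValRat.mul (p := p) (fne _) (fne _),
      padicValRat.mul (p := p) (mul_ne_zero (fne i) (fne j)) (fne _),
      padicValRat.mul (p := p) (fne i) (fne j)]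
    simp only [padicValRat.of_nat]
    omega
  have hnorm : ‖((r : ℚ) : ℚ_[p])‖ ≤ 1 := by
    rw [Padic.eq_padicNorm]
    have : padicNorm p r ≤ 1 := by
      rw [padicNorm.eq_zpow_of_nonzero hr0]
      apply zpow_le_one_of_nonpos₀
      · exact_mod_cast hp.one_le
      · simpa using hval
    exact_mod_cast this
  refine ⟨⟨((r : ℚ) : ℚ_[p]), hnorm⟩, ?_⟩
  show ((r : ℚ) : ℚ_[p]) = _
  rw [hr]
  have cne : ∀ k : ℕ, (k.factorial : ℚ_[p]) ≠ 0 := fun k => by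
    exact_mod_cast k.factorial_ne_zero
  push_cast
  rw [div_mul_div_comm]
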